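/- Let p₀ ∈ (0,1) and σ_M ∈ (0,1). Let l_R be a {0,1}-valued process adapted to the filtration (𝓕_t) such that for every t ∈ ℕ, P(l_R(t+1) = 0 ∣ 𝓕_t) ≤ p₀ almost surely, and let l_M be a {0,1}-valued process (not necessarily independent of l_R) with ∑_{k=1}^∞ P( ∑_{t=0}^{k-1} l_M(t) < σ_M · k ) < ∞. Define the overall loss process l(t) = l_R(t) + (1 − l_R(t))·l_M(t) and L(k) = ∑_{t=0}^{k-1} l(t). Then for every σ ∈ (0, max{1 − p₀, σ_M}), the series ∑_{k=1}^∞ P( L(k) < σ·k ) is finite. -/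

import Mathlib

open MeasureTheory Filter Topology

lemma exists_lam (p q : ℝ) (hpq : p < q) :
    ∃ lam : ℝ, 1 < lam ∧ 1 + (lam - 1) * p < lam ^ q := by
  set F : ℝ → ℝ := fun x => x ^ q - (1 + (x - 1) * p) with hF
  have hd : HasDerivAt F (q - p) 1 := by
    have h1 : HasDerivAt (fun x : ℝ => x ^ q) (q * (1:ℝ) ^ (q - 1)) 1 :=
      Real.hasDerivAt_rpow_const (Or.inl one_ne_zero)
    have h2 : HasDerivAt (fun x : ℝ => 1 + (x - 1) * p) p 1 := by
      have : HasDerivAt (fun x : ℝ => x) 1 1 := hasDerivAt_id 1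
      simpa using (((this.sub_const 1).mul_const p).const_add 1)
    have h3 := h1.sub h2
    rw [Real.one_rpow, mul_one] at h3
    exact h3
  have hslope : Tendsto (slope F 1) (𝓝[>] 1) (𝓝 (q - p)) :=
    (hasDerivAt_iff_tendsto_slope.mp hd).mono_left
      (nhdsWithin_mono 1 (fun x hx => ne_of_gt hx))
  have hev : ∀ᶠ x in 𝓝[>] (1:ℝ), 0 < slope F 1 x :=
    hslope.eventually (eventually_gt_nhds (by linarith))
  obtain ⟨x, hx0, hx1⟩ := (hev.and self_mem_nhdsWithin).exists
  refine ⟨x, hx1, ?_⟩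
  have hx1' : (0:ℝ) < x - 1 := by simpa [sub_pos] using hx1
  have : 0 < F x := by
    have hs : slope F 1 x = (F x - F 1) / (x - 1) := by
      rw [slope_def_field]
    have hF1 : F 1 = 0 := by simp [hF, Real.one_rpow]
    rw [hs, hF1, sub_zero, div_pos_iff] at hx0
    rcases hx0 with ⟨h, _⟩ | ⟨_, h⟩
    · exact h
    · linarith
  simp only [hF, sub_pos] at this
  linarith

lemma chernoff_lower_tail
    {Ω : Type*} [MeasurableSpace Ω] (μ : Measure Ω) [IsProbabilityMeasure μ]
    (ℱ : Filtration ℕ (inferInstance : MeasurableSpace Ω))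
    (p₀ : ℝ) (hp₀ : p₀ ∈ Set.Ioo (0 : ℝ) 1)
    (lR : ℕ → Ω → ℝ)
    (hR01 : ∀ t ω, lR t ω = 0 ∨ lR t ω = 1)
    (hadapted : Adapted ℱ lR)
    (hcond0 : ∀ t, (μ[Set.indicator {ω | lR (t + 1) ω = 0} (fun _ => (1 : ℝ)) | ℱ t])
      ≤ᵐ[μ] fun _ => p₀)
    (σ : ℝ) (hσ0 : 0 < σ) (hσ : σ < 1 - p₀) :
    (∑' k : ℕ,
      μ {ω | (∑ t ∈ Finset.range (k + 1), lR t ω) < σ * (k + 1 : ℕ)}) < ⊤ := by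
  classical
  set q : ℝ := 1 - σ with hq
  have hpq : p₀ < q := by simp [hq]; linarith
  have hq1 : q < 1 := by simp [hq]; linarith
  obtain ⟨lam, hlam1, hlt⟩ := exists_lam p₀ q hpq
  have hlam0 : (0:ℝ) < lam := by linarith
  set c : ℝ := 1 + (lam - 1) * p₀ with hc
  have hc1 : (1:ℝ) ≤ c := by nlinarith [hp₀.1]
  have hc0 : (0:ℝ) ≤ c := by linarith
  -- the auxiliary processes
  set g : ℕ → Ω → ℝ := fun t ω => if lR t ω = 0 then lam else 1 with hg
  set f : ℕ → Ω → ℝ := fun n ω => ∏ t ∈ Finset.range n, g t ω with hf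
  have hg1 : ∀ t ω, 1 ≤ g t ω := by
    intro t ω; simp only [hg]; split
    · linarith
    · exact le_refl _
  have hglam : ∀ t ω, g t ω ≤ lam := by
    intro t ω; simp only [hg]; split
    · exact le_refl _
    · linarith
  have hgm : ∀ t, StronglyMeasurable[ℱ t] (g t) := by
    intro t
    have hset : MeasurableSet[ℱ t] {ω | lR t ω = 0} :=
      (hadapted t) (measurableSet_singleton 0)
    exact (stronglyMeasurable_const.ite hset stronglyMeasurable_const)
  have hfm : ∀ n, StronglyMeasurable[ℱ n] (fun ω => f (n+1) ω) := by
    intro n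
    apply Finset.stronglyMeasurable_fun_prod
    intro t ht
    exact (hgm t).mono (ℱ.mono (by simpa [Finset.mem_range, Nat.lt_succ_iff] using ht))
  have hf1 : ∀ n ω, 1 ≤ f n ω := by
    intro n ω
    simp only [hf]
    calc (1:ℝ) = ∏ _t ∈ Finset.range n, 1 := by simp
      _ ≤ ∏ t ∈ Finset.range n, g t ω :=
          Finset.prod_le_prod (fun _ _ => zero_le_one) (fun t _ => hg1 t ω)
  have hflam : ∀ n ω, f n ω ≤ lam ^ n := by
    intro n ω
    simp only [hf]
    calc ∏ t ∈ Finset.range n, g t ω ≤ ∏ _t ∈ Finset.range n, lam :=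
          Finset.prod_le_prod (fun t _ => le_trans zero_le_one (hg1 t ω))
            (fun t _ => hglam t ω)
      _ = lam ^ n := by simp
  have hfm' : ∀ n, StronglyMeasurable (f n) := by
    intro n
    apply Finset.stronglyMeasurable_fun_prod
    intro t _
    exact (hgm t).mono (ℱ.le t)
  have hfint : ∀ n, Integrable (f n) μ := by
    intro n
    refine Integrable.mono' (integrable_const (lam ^ n)) (hfm' n).aestronglyMeasurable ?_
    refine ae_of_all _ (fun ω => ?_)
    rw [Real.norm_of_nonneg (by linarith [hf1 n ω])]
    exact hflam n ω
  have hgint : ∀ t, Integrable (g t) μ := by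
    intro t
    refine Integrable.mono' (integrable_const lam) ((hgm t).mono (ℱ.le t)).aestronglyMeasurable ?_
    refine ae_of_all _ (fun ω => ?_)
    rw [Real.norm_of_nonneg (by linarith [hg1 t ω])]
    exact hglam t ω
  -- conditional expectation bound
  have hgcond : ∀ t : ℕ, (μ[g (t+1) | ℱ t]) ≤ᵐ[μ] fun _ => c := by
    intro t
    set ind := Set.indicator {ω | lR (t+1) ω = 0} (fun _ => (1:ℝ)) with hind
    have hind_meas : StronglyMeasurable[ℱ (t+1)] ind := by
      refine stronglyMeasurable_const.indicator ?_
      exact (hadapted (t+1)) (measurableSet_singleton 0)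
    have hind_int : Integrable ind μ := by
      refine Integrable.mono' (integrable_const 1)
        ((hind_meas.mono (ℱ.le (t+1))).aestronglyMeasurable) ?_
      refine ae_of_all _ (fun ω => ?_)
      simp only [hind, Set.indicator]
      split <;> simp
    have hgeq : g (t+1) = (fun _ => (1:ℝ)) + (lam - 1) • ind := by
      funext ω
      by_cases h : lR (t+1) ω = 0 <;>
        simp [hg, hind, Set.indicator_apply, h] <;> ring
    have h1 : μ[g (t+1)|ℱ t] =ᵐ[μ]
        (fun _ => (1:ℝ)) + (lam - 1) • μ[ind|ℱ t] := by
      rw [hgeq]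
      refine (condExp_add (integrable_const 1) (hind_int.smul (lam - 1)) (ℱ t)).trans ?_
      have hcc : μ[(fun _ => (1:ℝ))|ℱ t] = fun _ => (1:ℝ) := condExp_const (ℱ.le t) 1
      rw [hcc]
      filter_upwards [condExp_smul (lam - 1) ind (m := ℱ t) (μ := μ)] with ω h2
      simp only [Pi.add_apply, Pi.smul_apply, smul_eq_mul] at *
      rw [h2]
    filter_upwards [h1, hcond0 t] with ω h2 h3
    simp only [Pi.add_apply, Pi.smul_apply, smul_eq_mul] at h2 ⊢
    have hlam1' : (0:ℝ) ≤ lam - 1 := by linarith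
    calc (μ[g (t+1)|ℱ t]) ω = 1 + (lam - 1) * (μ[ind|ℱ t]) ω := h2
      _ ≤ 1 + (lam - 1) * p₀ := by nlinarith
      _ = c := rfl
  -- key moment bound by induction
  have hkey : ∀ k : ℕ, ∫ ω, f (k+1) ω ∂μ ≤ lam * c ^ k := by
    intro k
    induction k with
    | zero =>
      have heq : ∀ ω, f 1 ω = g 0 ω := fun ω => by simp [hf]
      calc ∫ ω, f 1 ω ∂μ = ∫ ω, g 0 ω ∂μ := by
            exact integral_congr_ae (ae_of_all _ heq)
        _ ≤ ∫ _ω, lam ∂μ := integral_mono (hgint 0) (integrable_const lam)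
            (fun ω => hglam 0 ω)
        _ = lam := by simp
        _ = lam * c ^ 0 := by ring
    | succ k ih =>
      have hsplit : f (k+1+1) = f (k+1) * g (k+1) := by
        funext ω; simp [hf, Finset.prod_range_succ]
      have hint_fg : Integrable (f (k+1) * g (k+1)) μ := by
        rw [← hsplit]; exact hfint (k+2)
      have pull : μ[f (k+1) * g (k+1)|ℱ k] =ᵐ[μ] f (k+1) * μ[g (k+1)|ℱ k] :=
        condExp_mul_of_stronglyMeasurable_left (hfm k) hint_fg (hgint (k+1))
      have hint1 : Integrable (f (k+1) * μ[g (k+1)|ℱ k]) μ :=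
        (integrable_condExp (f := f (k+1) * g (k+1)) (m := ℱ k)).congr pull
      calc ∫ ω, f (k+1+1) ω ∂μ = ∫ ω, (f (k+1) * g (k+1)) ω ∂μ := by rw [hsplit]
        _ = ∫ ω, (μ[f (k+1) * g (k+1)|ℱ k]) ω ∂μ :=
            (integral_condExp (ℱ.le k)).symm
        _ = ∫ ω, (f (k+1) * μ[g (k+1)|ℱ k]) ω ∂μ := integral_congr_ae pull
        _ ≤ ∫ ω, c * f (k+1) ω ∂μ := by
            refine integral_mono_ae hint1 ((hfint (k+1)).const_mul c) ?_
            filter_upwards [hgcond k] with ω hω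
            simp only [Pi.mul_apply]
            have h0 : (0:ℝ) ≤ f (k+1) ω := by linarith [hf1 (k+1) ω]
            calc f (k+1) ω * (μ[g (k+1)|ℱ k]) ω ≤ f (k+1) ω * c :=
                  mul_le_mul_of_nonneg_left hω h0
              _ = c * f (k+1) ω := by ring
        _ = c * ∫ ω, f (k+1) ω ∂μ := integral_const_mul c _
        _ ≤ c * (lam * c ^ k) := mul_le_mul_of_nonneg_left ih hc0
        _ = lam * c ^ (k+1) := by ring
  -- event inclusion
  have hsub : ∀ k : ℕ, {ω | (∑ t ∈ Finset.range (k + 1), lR t ω) < σ * (k + 1 : ℕ)}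
      ⊆ {ω | lam ^ (q * ((k + 1 : ℕ) : ℝ)) ≤ f (k+1) ω} := by
    intro k ω hω
    simp only [Set.mem_setOf_eq] at hω ⊢
    set n := k + 1 with hn
    set N := (Finset.range n).filter (fun t => lR t ω = 0) with hN
    have hsum : (∑ t ∈ Finset.range n, lR t ω) + (N.card : ℝ) = n := by
      have hcard : ((N.card : ℝ)) = ∑ t ∈ Finset.range n,
          (if lR t ω = 0 then (1:ℝ) else 0) := by
        rw [hN]; rw [Finset.sum_boole]
      rw [hcard, ← Finset.sum_add_distrib]
      have : ∀ t ∈ Finset.range n,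
          lR t ω + (if lR t ω = 0 then (1:ℝ) else 0) = 1 := by
        intro t _
        rcases hR01 t ω with h | h <;> simp [h]
      rw [Finset.sum_congr rfl this]
      simp
    have hNcard : q * (n : ℝ) < (N.card : ℝ) := by
      have hn0 : (0:ℝ) < (n : ℝ) := by positivity
      have : (N.card : ℝ) = (n : ℝ) - ∑ t ∈ Finset.range n, lR t ω := by linarith
      rw [this, hq]
      nlinarith
    have hfval : f n ω = lam ^ N.card := by
      simp only [hf, hg]
      rw [Finset.prod_ite, Finset.prod_const, Finset.prod_const, one_pow, mul_one]
    rw [hfval, ← Real.rpow_natCast lam N.card]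
    exact (Real.rpow_le_rpow_left_iff hlam1).mpr (le_of_lt hNcard)
  -- Markov bound
  have hbound : ∀ k : ℕ, μ {ω | lam ^ (q * ((k + 1 : ℕ) : ℝ)) ≤ f (k+1) ω}
      ≤ ENNReal.ofReal ((lam / lam ^ q) * (c / lam ^ q) ^ k) := by
    intro k
    set ε := lam ^ (q * ((k + 1 : ℕ) : ℝ)) with hε
    have hε0 : (0:ℝ) < ε := Real.rpow_pos_of_pos hlam0 _
    have hmark := mul_meas_ge_le_integral_of_nonneg
      (ae_of_all μ (fun ω => le_trans zero_le_one (hf1 (k+1) ω))) (hfint (k+1)) ε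
    have h2 : (μ {ω | ε ≤ f (k+1) ω}).toReal ≤ (lam * c ^ k) / ε := by
      rw [le_div_iff₀ hε0, mul_comm]
      exact le_trans hmark (hkey k)
    have hεval : ε = lam ^ q * (lam ^ q) ^ k := by
      rw [hε, show q * ((k + 1 : ℕ) : ℝ) = q + q * (k : ℝ) by push_cast; ring,
        Real.rpow_add hlam0, Real.rpow_mul (le_of_lt hlam0),
        Real.rpow_natCast]
    calc μ {ω | ε ≤ f (k+1) ω}
        = ENNReal.ofReal (μ {ω | ε ≤ f (k+1) ω}).toReal :=
          (ENNReal.ofReal_toReal (measure_ne_top μ _)).symm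
      _ ≤ ENNReal.ofReal ((lam * c ^ k) / ε) := ENNReal.ofReal_le_ofReal h2
      _ = ENNReal.ofReal ((lam / lam ^ q) * (c / lam ^ q) ^ k) := by
          congr 1
          rw [div_pow, div_mul_div_comm, hεval]
  -- geometric summation
  have hqpos : (0:ℝ) < lam ^ q := Real.rpow_pos_of_pos hlam0 q
  set A : ℝ := lam / lam ^ q with hA
  set r : ℝ := c / lam ^ q with hr
  have hr0 : (0:ℝ) ≤ r := div_nonneg hc0 hqpos.le
  have hr1 : r < 1 := (div_lt_one hqpos).mpr hlt
  have hA0 : (0:ℝ) ≤ A := div_nonneg hlam0.le hqpos.le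
  calc (∑' k : ℕ, μ {ω | (∑ t ∈ Finset.range (k + 1), lR t ω) < σ * (k + 1 : ℕ)})
      ≤ ∑' k : ℕ, ENNReal.ofReal (A * r ^ k) :=
        ENNReal.tsum_le_tsum (fun k => le_trans (measure_mono (hsub k)) (hbound k))
    _ = ENNReal.ofReal A * ∑' k : ℕ, (ENNReal.ofReal r) ^ k := by
        simp_rw [ENNReal.ofReal_mul hA0, ENNReal.ofReal_pow hr0]
        rw [ENNReal.tsum_mul_left]
    _ < ⊤ := by
        rw [ENNReal.tsum_geometric]
        have hrlt : ENNReal.ofReal r < 1 := ENNReal.ofReal_lt_one.mpr hr1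
        refine ENNReal.mul_lt_top ENNReal.ofReal_lt_top ?_
        exact ENNReal.inv_lt_top.mpr (pos_iff_ne_zero.mpr
          (fun h => absurd (tsub_eq_zero_iff_le.mp h) (not_le.mpr hrlt)))


/-- Proposition 4: possibly dependent random losses and malicious
attacks, lower-tail version. The overall loss process satisfies
`∑ₖ P(L(k) < σ k) < ∞` for every `σ ∈ (0, max{1 − p₀, σ_M})`. -/
theorem combined_dependent_loss_lower_tail_summable
    {Ω : Type*} [MeasurableSpace Ω] (μ : Measure Ω) [IsProbabilityMeasure μ]
    (ℱ : Filtration ℕ (inferInstance : MeasurableSpace Ω))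
    (p₀ : ℝ) (hp₀ : p₀ ∈ Set.Ioo (0 : ℝ) 1)
    (σM : ℝ) (hσM : σM ∈ Set.Ioo (0 : ℝ) 1)
    (lR lM : ℕ → Ω → ℝ)
    (hR01 : ∀ t ω, lR t ω = 0 ∨ lR t ω = 1)
    (hM01 : ∀ t ω, lM t ω = 0 ∨ lM t ω = 1)
    (hadapted : Adapted ℱ lR)
    (hcond0 : ∀ t, (μ[Set.indicator {ω | lR (t + 1) ω = 0} (fun _ => (1 : ℝ)) | ℱ t])
      ≤ᵐ[μ] fun _ => p₀)
    (hMsum : (∑' k : ℕ,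
      μ {ω | (∑ t ∈ Finset.range (k + 1), lM t ω) < σM * (k + 1 : ℕ)}) < ⊤)
    (l : ℕ → Ω → ℝ)
    (hl : ∀ t ω, l t ω = lR t ω + (1 - lR t ω) * lM t ω)
    (σ : ℝ) (hσ : σ ∈ Set.Ioo (0 : ℝ) (max (1 - p₀) σM)) :
    (∑' k : ℕ,
      μ {ω | (∑ t ∈ Finset.range (k + 1), l t ω) < σ * (k + 1 : ℕ)}) < ⊤ := by
  rcases lt_max_iff.mp hσ.2 with hcase | hcase
  · -- σ < 1 - p₀ : compare with the random-loss process lR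
    have hsub : ∀ k : ℕ, {ω | (∑ t ∈ Finset.range (k + 1), l t ω) < σ * (k + 1 : ℕ)}
        ⊆ {ω | (∑ t ∈ Finset.range (k + 1), lR t ω) < σ * (k + 1 : ℕ)} := by
      intro k ω hω
      simp only [Set.mem_setOf_eq] at hω ⊢
      refine lt_of_le_of_lt ?_ hω
      refine Finset.sum_le_sum (fun t _ => ?_)
      rw [hl t ω]
      rcases hM01 t ω with h | h <;> rcases hR01 t ω with h' | h' <;>
        simp [h, h']
    calc (∑' k : ℕ, μ {ω | (∑ t ∈ Finset.range (k + 1), l t ω) < σ * (k + 1 : ℕ)})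
        ≤ (∑' k : ℕ, μ {ω | (∑ t ∈ Finset.range (k + 1), lR t ω) < σ * (k + 1 : ℕ)}) :=
          ENNReal.tsum_le_tsum (fun k => measure_mono (hsub k))
      _ < ⊤ := chernoff_lower_tail μ ℱ p₀ hp₀ lR hR01 hadapted hcond0 σ hσ.1 hcase
  · -- σ < σM : compare with the malicious-loss process lM
    have hsub : ∀ k : ℕ, {ω | (∑ t ∈ Finset.range (k + 1), l t ω) < σ * (k + 1 : ℕ)}
        ⊆ {ω | (∑ t ∈ Finset.range (k + 1), lM t ω) < σM * (k + 1 : ℕ)} := by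
      intro k ω hω
      simp only [Set.mem_setOf_eq] at hω ⊢
      have h1 : (∑ t ∈ Finset.range (k + 1), lM t ω) ≤ ∑ t ∈ Finset.range (k + 1), l t ω := by
        refine Finset.sum_le_sum (fun t _ => ?_)
        rw [hl t ω]
        rcases hM01 t ω with h | h <;> rcases hR01 t ω with h' | h' <;>
          simp [h, h']
      have h2 : σ * ((k + 1 : ℕ) : ℝ) ≤ σM * ((k + 1 : ℕ) : ℝ) := by
        have : (0:ℝ) ≤ ((k + 1 : ℕ) : ℝ) := by positivity
        nlinarith
      linarith
    calc (∑' k : ℕ, μ {ω | (∑ t ∈ Finset.range (k + 1), l t ω) < σ * (k + 1 : ℕ)})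
        ≤ (∑' k : ℕ, μ {ω | (∑ t ∈ Finset.range (k + 1), lM t ω) < σM * (k + 1 : ℕ)}) :=
          ENNReal.tsum_le_tsum (fun k => measure_mono (hsub k))
      _ < ⊤ := hMsum
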